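/- arXiv:2402.08340 — 3 statements merged into one kernel-verified Lean document; each statement's English description precedes it below -/
import Mathlib

section
/- Let a, r ∈ ℕ and let n ≥ ra(a+1)/2 be an integer. There exists a polynomial 𝒫_{a,r,n} ∈ ℚ[x] of degree exactly n − ra(a+1)/2, with leading coefficient 1/(n − ra(a+1)/2)!, such that c_{a,k,r}(n) = 𝒫_{a,r,n}(k) for every k ∈ ℤ. -/
open PowerSeries Finset
open scoped Classical

noncomputable section

/-- `(1 - q^n)^(-k)` in `ℚ⟦q⟧`, for `k : ℤ` (for negative `k` this is the
power `(1 - q^n)^{|k|}`). -/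
def dFac (n : ℕ) (k : ℤ) : PowerSeries ℚ :=
  if 0 ≤ k then ((1 - (X : PowerSeries ℚ) ^ n)⁻¹) ^ k.toNat
  else (1 - (X : PowerSeries ℚ) ^ n) ^ (-k).toNat

/-- Strictly increasing `a`-tuples `1 ≤ n₁ < n₂ < ⋯ < n_a ≤ N`. -/
def strictTuples (a N : ℕ) : Finset (Fin a → ℕ) :=
  (Fintype.piFinset fun _ : Fin a => Finset.Icc 1 N).filter fun f => StrictMono f

/-- The coefficient `c_{a,k,r}(N)` of `q^N` in
`𝒜_{a,k,r}(q) = Σ_{1≤n₁<⋯<n_a} q^{r(n₁+⋯+n_a)} / ∏_j (1-q^{n_j})^k`.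
Since `r ≥ 1`, tuples containing an entry `> N` contribute `0` to the coefficient of `q^N`,
so the (q-adically convergent) infinite sum can be truncated to entries in `[1, N]`. -/
def Acoeff (a : ℕ) (k : ℤ) (r : ℕ) (N : ℕ) : ℚ :=
  ∑ f ∈ strictTuples a N,
    PowerSeries.coeff N ((X : PowerSeries ℚ) ^ (r * ∑ j, f j) * ∏ j, dFac (f j) k)

lemma geom_mul (n : ℕ) (hn : 1 ≤ n) :
    (1 - (X : PowerSeries ℚ) ^ n) * (1 - (X : PowerSeries ℚ) ^ n)⁻¹ = 1 :=
  PowerSeries.mul_inv_cancel _ (by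
    simp [map_pow, constantCoeff_X, zero_pow (by omega : n ≠ 0)])

lemma geom_eq (n : ℕ) (hn : 1 ≤ n) :
    (1 - (X : PowerSeries ℚ) ^ n)⁻¹ =
      1 + X ^ n * (1 - (X : PowerSeries ℚ) ^ n)⁻¹ := by
  have h := geom_mul n hn
  linear_combination h

lemma dvd_sub_iff {n m : ℕ} (h : n ≤ m) : n ∣ (m - n) ↔ n ∣ m := by
  constructor
  · rintro ⟨c, hc⟩; exact ⟨c + 1, by rw [Nat.mul_add, Nat.mul_one]; omega⟩
  · intro hd; exact Nat.dvd_sub hd dvd_rfl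

lemma coeff_geom (n : ℕ) (hn : 1 ≤ n) (m : ℕ) :
    PowerSeries.coeff m (1 - (X : PowerSeries ℚ) ^ n)⁻¹ =
      if n ∣ m then 1 else 0 := by
  induction m using Nat.strong_induction_on with
  | _ m ih =>
    conv_lhs => rw [geom_eq n hn]
    rw [map_add, PowerSeries.coeff_X_pow_mul']
    rcases Nat.lt_or_ge m n with h | h
    · rw [if_neg (by omega)]
      rcases Nat.eq_zero_or_pos m with rfl | hm
      · simp
      · have hnd : ¬ n ∣ m := fun hd => by
          have := Nat.le_of_dvd hm hd; omega
        simp [PowerSeries.coeff_one, hnd, hm.ne']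
    · rw [if_pos h, ih (m - n) (by omega)]
      have hm : m ≠ 0 := by omega
      rw [PowerSeries.coeff_one, if_neg hm, zero_add]
      simp only [dvd_sub_iff h]

lemma coeff_geom_pow (n : ℕ) (hn : 1 ≤ n) (t : ℕ) (m : ℕ) :
    PowerSeries.coeff m (((1 - (X : PowerSeries ℚ) ^ n)⁻¹) ^ (t + 1)) =
      if n ∣ m then ((m / n + t).choose t : ℚ) else 0 := by
  induction t generalizing m with
  | zero =>
    rw [pow_one, coeff_geom n hn]
    simp
  | succ t ih =>
    induction m using Nat.strong_induction_on with
    | _ m ihm =>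
      have key : ((1 - (X : PowerSeries ℚ) ^ n)⁻¹) ^ (t + 2) =
          ((1 - (X : PowerSeries ℚ) ^ n)⁻¹) ^ (t + 1) +
            X ^ n * ((1 - (X : PowerSeries ℚ) ^ n)⁻¹) ^ (t + 2) := by
        linear_combination ((1 - (X : PowerSeries ℚ) ^ n)⁻¹ ^ (t + 1)) * geom_mul n hn
      conv_lhs => rw [show t + 1 + 1 = t + 2 from rfl, key]
      rw [map_add, PowerSeries.coeff_X_pow_mul', ih m]
      rcases Nat.lt_or_ge m n with h | h
      · rw [if_neg (show ¬ n ≤ m by omega), add_zero]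
        rcases Nat.eq_zero_or_pos m with rfl | hm
        · simp
        · have hnd : ¬ n ∣ m := fun hd => by
            have := Nat.le_of_dvd hm hd; omega
          simp [hnd]
      · rw [if_pos h, ihm (m - n) (by omega)]
        by_cases hd : n ∣ m
        · rw [if_pos hd, if_pos ((dvd_sub_iff h).mpr hd), if_pos hd]
          have hj : 1 ≤ m / n := (Nat.one_le_div_iff (by omega)).mpr h
          obtain ⟨c, hc⟩ := hd
          have hc1 : 1 ≤ c := by
            rcases Nat.eq_zero_or_pos c with rfl | h1
            · omega
            · exact h1
          obtain ⟨c', rfl⟩ : ∃ c', c = c' + 1 := ⟨c - 1, by omega⟩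
          have h1 : m / n = c' + 1 := by rw [hc, Nat.mul_div_cancel_left _ (by omega : 0 < n)]
          have h2 : (m - n) / n = c' := by
            have : m - n = n * c' := by
              rw [Nat.mul_add, Nat.mul_one] at hc; omega
            rw [this, Nat.mul_div_cancel_left _ (by omega : 0 < n)]
          rw [h1, h2]
          norm_cast
          have e1 : c' + 1 + t = c' + t + 1 := by omega
          have e2 : c' + (t + 1) = c' + t + 1 := by omega
          have e3 : c' + 1 + (t + 1) = (c' + t + 1) + 1 := by omega
          rw [e1, e2, e3]; exact (Nat.choose_succ_succ _ _).symm
        · rw [if_neg hd, if_neg (fun hh => hd ((dvd_sub_iff h).mp hh)), if_neg hd, add_zero]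

lemma coeff_sub_pow (n : ℕ) (hn : 1 ≤ n) (t : ℕ) (m : ℕ) :
    PowerSeries.coeff m ((1 - (X : PowerSeries ℚ) ^ n) ^ t) =
      if n ∣ m then (-1 : ℚ) ^ (m / n) * (t.choose (m / n) : ℚ) else 0 := by
  induction t generalizing m with
  | zero =>
    rw [pow_zero, PowerSeries.coeff_one]
    rcases Nat.eq_zero_or_pos m with rfl | hm
    · simp
    · have hj : n ∣ m → m / n ≠ 0 := fun hd => by
        have := Nat.le_of_dvd hm hd
        have := (Nat.one_le_div_iff (by omega : 0 < n)).mpr this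
        omega
      rw [if_neg hm.ne']
      by_cases hd : n ∣ m
      · have h0 : (0:ℕ).choose (m/n) = 0 := Nat.choose_eq_zero_of_lt (Nat.pos_of_ne_zero (hj hd))
        rw [if_pos hd, h0]
        simp
      · rw [if_neg hd]
  | succ t ih =>
    have key : (1 - (X : PowerSeries ℚ) ^ n) ^ (t + 1) =
        (1 - (X : PowerSeries ℚ) ^ n) ^ t - X ^ n * (1 - (X : PowerSeries ℚ) ^ n) ^ t := by
      ring
    rw [key, map_sub, PowerSeries.coeff_X_pow_mul', ih m]
    rcases Nat.lt_or_ge m n with h | h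
    · rw [if_neg (show ¬ n ≤ m by omega), sub_zero]
      rcases Nat.eq_zero_or_pos m with rfl | hm
      · simp
      · have hnd : ¬ n ∣ m := fun hd => by
          have := Nat.le_of_dvd hm hd; omega
        simp [hnd]
    · rw [if_pos h, ih (m - n)]
      by_cases hd : n ∣ m
      · rw [if_pos hd, if_pos ((dvd_sub_iff h).mpr hd), if_pos hd]
        obtain ⟨c, hc⟩ := hd
        have hc1 : 1 ≤ c := by
          rcases Nat.eq_zero_or_pos c with rfl | h1
          · omega
          · exact h1
        obtain ⟨c', rfl⟩ : ∃ c', c = c' + 1 := ⟨c - 1, by omega⟩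
        have h1 : m / n = c' + 1 := by rw [hc, Nat.mul_div_cancel_left _ (by omega : 0 < n)]
        have h2 : (m - n) / n = c' := by
          have : m - n = n * c' := by
            rw [Nat.mul_add, Nat.mul_one] at hc; omega
          rw [this, Nat.mul_div_cancel_left _ (by omega : 0 < n)]
        rw [h1, h2, Nat.choose_succ_succ]
        push_cast
        ring
      · rw [if_neg hd, if_neg (fun hh => hd ((dvd_sub_iff h).mp hh)), if_neg hd, sub_zero]

def Rpoly (n m : ℕ) : Polynomial ℚ :=
  if n ∣ m then (((m / n).factorial : ℚ)⁻¹) • ascPochhammer ℚ (m / n) else 0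

lemma Rpoly_eval (n m : ℕ) (x : ℚ) :
    (Rpoly n m).eval x =
      if n ∣ m then (((m / n).factorial : ℚ)⁻¹) * (ascPochhammer ℚ (m / n)).eval x
      else 0 := by
  unfold Rpoly; split_ifs <;> simp

lemma ascPochhammer_rat_nat (t j : ℕ) :
    (ascPochhammer ℚ j).eval ((t : ℕ) : ℚ) = (t.ascFactorial j : ℚ) := by
  rw [← ascPochhammer_eval_cast, ascPochhammer_nat_eq_ascFactorial]

lemma coeff_dFac (n : ℕ) (hn : 1 ≤ n) (k : ℤ) (m : ℕ) :
    PowerSeries.coeff m (dFac n k) = (Rpoly n m).eval (k : ℚ) := by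
  rw [Rpoly_eval]
  by_cases hk : 0 ≤ k
  · rw [dFac, if_pos hk]
    obtain ⟨t, rfl⟩ : ∃ t : ℕ, k = (t : ℤ) := ⟨k.toNat, (Int.toNat_of_nonneg hk).symm⟩
    rw [Int.toNat_natCast]
    push_cast
    rw [ascPochhammer_rat_nat]
    cases t with
    | zero =>
      rw [pow_zero, PowerSeries.coeff_one]
      by_cases hd : n ∣ m
      · rcases Nat.eq_zero_or_pos m with rfl | hm
        · simp
        · have hj : m / n ≠ 0 := by
            have h1 := Nat.le_of_dvd hm hd
            have := (Nat.one_le_div_iff (by omega : 0 < n)).mpr h1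
            omega
          obtain ⟨j, hj'⟩ : ∃ j, m / n = j + 1 := ⟨m / n - 1, (Nat.succ_pred_eq_of_pos (Nat.pos_of_ne_zero hj)).symm⟩
          rw [if_neg hm.ne', if_pos hd, hj', Nat.zero_ascFactorial]
          simp
      · rcases Nat.eq_zero_or_pos m with rfl | hm
        · exact absurd (dvd_zero n) hd
        · rw [if_neg hm.ne', if_neg hd]
    | succ s =>
      rw [coeff_geom_pow n hn s m]
      by_cases hd : n ∣ m
      · rw [if_pos hd, if_pos hd, Nat.ascFactorial_eq_factorial_mul_choose]
        push_cast
        rw [Nat.add_comm s (m / n), Nat.choose_symm_add]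
        field_simp
      · rw [if_neg hd, if_neg hd]
  · rw [dFac, if_neg hk]
    obtain ⟨t, rfl⟩ : ∃ t : ℕ, k = -(t : ℤ) := ⟨(-k).toNat, by omega⟩
    have ht : 1 ≤ t := by omega
    rw [show (-(-(t:ℤ))).toNat = t by omega]
    rw [coeff_sub_pow n hn t m]
    by_cases hd : n ∣ m
    · rw [if_pos hd, if_pos hd]
      push_cast
      rw [ascPochhammer_eval_neg_eq_descPochhammer, descPochhammer_eval_eq_descFactorial,
        Nat.descFactorial_eq_factorial_mul_choose]
      push_cast
      field_simp
    · rw [if_neg hd, if_neg hd]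

lemma Rpoly_zero (n : ℕ) : Rpoly n 0 = 1 := by
  simp [Rpoly, Nat.zero_div]

lemma Rpoly_degree_le (n m : ℕ) : (Rpoly n m).degree ≤ ((m / n : ℕ) : WithBot ℕ) := by
  unfold Rpoly
  split_ifs
  · refine (Polynomial.degree_smul_le _ _).trans ?_
    rw [Polynomial.degree_eq_natDegree (monic_ascPochhammer _ _).ne_zero,
      ascPochhammer_natDegree]
  · simp

lemma Rpoly_coeff_self (m : ℕ) : (Rpoly 1 m).coeff m = ((m.factorial : ℚ))⁻¹ := by
  rw [Rpoly, if_pos (one_dvd m), Nat.div_one, Polynomial.coeff_smul]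
  have h := (monic_ascPochhammer ℚ m).coeff_natDegree
  rw [ascPochhammer_natDegree] at h
  rw [h, smul_eq_mul, mul_one]

lemma sum_fin_id (a : ℕ) : ∑ j : Fin a, (j.val + 1) = a * (a + 1) / 2 := by
  rw [Fin.sum_univ_eq_sum_range (fun i => i + 1) a]
  have h1 : ∑ i ∈ range (a + 1), i = ∑ i ∈ range a, (i + 1) := by
    rw [Finset.sum_range_succ' (fun i => i) a]
    simp
  have h2 := Finset.sum_range_id_mul_two (a + 1)
  rw [h1] at h2
  simp only [Nat.add_sub_cancel] at h2
  rw [Nat.mul_comm a (a + 1)]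
  exact (Nat.div_eq_of_eq_mul_left (by norm_num) h2.symm).symm

def Qpoly (a r n : ℕ) (f : Fin a → ℕ) : Polynomial ℚ :=
  if r * (∑ j, f j) ≤ n then
    ∑ l ∈ finsuppAntidiag (univ : Finset (Fin a)) (n - r * ∑ j, f j),
      ∏ j, Rpoly (f j) (l j)
  else 0


lemma mem_strictTuples {a N : ℕ} {f : Fin a → ℕ} (hf : f ∈ strictTuples a N) :
    (∀ j, f j ∈ Finset.Icc 1 N) ∧ StrictMono f := by
  rw [strictTuples, Finset.mem_filter, Fintype.mem_piFinset] at hf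
  exact hf

lemma strictTuples_lb {a N : ℕ} {f : Fin a → ℕ} (hf : f ∈ strictTuples a N) :
    ∀ j : Fin a, j.val + 1 ≤ f j := by
  obtain ⟨h1, h2⟩ := mem_strictTuples hf
  have key : ∀ v (h : v < a), v + 1 ≤ f ⟨v, h⟩ := by
    intro v
    induction v with
    | zero => intro h; exact (Finset.mem_Icc.mp (h1 ⟨0, h⟩)).1
    | succ v ih =>
      intro h
      have hlt : (⟨v, by omega⟩ : Fin a) < ⟨v + 1, h⟩ := by
        simp [Fin.lt_def]
      have := h2 hlt
      have := ih (by omega)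
      omega
  intro j
  have := key j.val j.isLt
  simpa using this


/-- Corollary 1.4, `𝒜`-part.  For `a, r ∈ ℕ` (positive) and
`n ≥ ra(a+1)/2`, there is a polynomial `𝒫_{a,r,n}` of degree exactly `n - ra(a+1)/2`
with leading coefficient `1/(n - ra(a+1)/2)!` such that `c_{a,k,r}(n) = 𝒫_{a,r,n}(k)`
for every `k ∈ ℤ`. -/
theorem A_coeff_is_polynomial_in_k (a r : ℕ) (ha : 1 ≤ a) (hr : 1 ≤ r)
    (n : ℕ) (hn : r * (a * (a + 1) / 2) ≤ n) :
    ∃ P : Polynomial ℚ,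
      P.degree = ((n - r * (a * (a + 1) / 2) : ℕ) : WithBot ℕ) ∧
      P.leadingCoeff = ((n - r * (a * (a + 1) / 2)).factorial : ℚ)⁻¹ ∧
      ∀ k : ℤ, Acoeff a k r n = P.eval (k : ℚ) := by
  haveI : NeZero a := ⟨by omega⟩
  set T := a * (a + 1) / 2 with hT
  set d := n - r * T with hd
  -- basic inequalities
  have haT : a ≤ T := by
    rw [hT, Nat.le_div_iff_mul_le (by norm_num : 0 < 2)]
    exact Nat.mul_le_mul_left a (by omega)
  have haN : a ≤ n := haT.trans ((Nat.le_mul_of_pos_left T (by omega)).trans hn)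
  -- the distinguished tuple
  set f0 : Fin a → ℕ := fun j => j.val + 1 with hf0
  have hf0mem : f0 ∈ strictTuples a n := by
    rw [strictTuples, Finset.mem_filter, Fintype.mem_piFinset]
    constructor
    · intro j
      rw [Finset.mem_Icc]
      have := j.isLt
      simp only [hf0]
      omega
    · intro i j hij
      simp only [hf0]
      have : i.val < j.val := hij
      omega
  have hSf0 : ∑ j, f0 j = T := sum_fin_id a
  set P : Polynomial ℚ := ∑ f ∈ strictTuples a n, Qpoly a r n f with hP
  -- degree bound for each term
  have term_deg : ∀ (f : Fin a → ℕ), (∀ j : Fin a, 1 ≤ f j) → ∀ (l : Fin a →₀ ℕ),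
      (∏ j, Rpoly (f j) (l j)).degree ≤ ((∑ j, l j / f j : ℕ) : WithBot ℕ) := by
    intro f hf l
    refine (Polynomial.degree_prod_le _ _).trans ?_
    rw [Nat.cast_sum]
    exact Finset.sum_le_sum fun j _ => Rpoly_degree_le _ _
  -- degree of each Q f is at most d
  have Qdeg : ∀ f ∈ strictTuples a n, (Qpoly a r n f).degree ≤ (d : WithBot ℕ) := by
    intro f hf
    unfold Qpoly
    split_ifs with hc
    · refine (Polynomial.degree_sum_le _ _).trans ?_
      rw [Finset.sup_le_iff]
      intro l hl
      rw [Finset.mem_finsuppAntidiag] at hl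
      have hsum : ∑ j, l j = n - r * ∑ j, f j := hl.1
      have hST : T ≤ ∑ j, f j := by
        rw [← hSf0]
        exact Finset.sum_le_sum fun j _ => strictTuples_lb hf j
      have hle : n - r * ∑ j, f j ≤ d := by
        have := Nat.mul_le_mul_left r hST
        omega
      refine (term_deg f (fun j => (strictTuples_lb hf j).trans' (by omega)) l).trans ?_
      rw [Nat.cast_le]
      calc ∑ j, l j / f j ≤ ∑ j, l j :=
            Finset.sum_le_sum fun j _ => Nat.div_le_self _ _
        _ ≤ d := by rw [hsum]; exact hle
    · simp
  -- coefficient at d of Q f vanishes for f ≠ f0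
  have Qcoeff : ∀ f ∈ strictTuples a n, f ≠ f0 → (Qpoly a r n f).coeff d = 0 := by
    intro f hf hne
    have hST : T + 1 ≤ ∑ j, f j := by
      rw [← hSf0]
      have hle : ∀ j ∈ (univ : Finset (Fin a)), f0 j ≤ f j := fun j _ => strictTuples_lb hf j
      have hex : ∃ j ∈ (univ : Finset (Fin a)), f0 j < f j := by
        by_contra hcon
        push_neg at hcon
        apply hne
        funext j
        have h1 := hcon j (mem_univ j)
        have h2 := strictTuples_lb hf j
        simp only [hf0] at h1 ⊢
        omega
      exact Finset.sum_lt_sum hle hex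
    unfold Qpoly
    split_ifs with hc
    · rw [Polynomial.finset_sum_coeff]
      refine Finset.sum_eq_zero fun l hl => ?_
      rw [Finset.mem_finsuppAntidiag] at hl
      apply Polynomial.coeff_eq_zero_of_degree_lt
      have h1 : r * (T + 1) ≤ r * ∑ j, f j := Nat.mul_le_mul_left r hST
      have h2 : r * (T + 1) = r * T + r := by ring
      have hlt : n - r * ∑ j, f j < d := by omega
      refine lt_of_le_of_lt
        (term_deg f (fun j => (strictTuples_lb hf j).trans' (by omega)) l) ?_
      rw [Nat.cast_lt]
      calc ∑ j, l j / f j ≤ ∑ j, l j := Finset.sum_le_sum fun j _ => Nat.div_le_self _ _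
        _ = n - r * ∑ j, f j := hl.1
        _ < d := hlt
    · simp
  -- coefficient at d of Q f0
  set l0 : Fin a →₀ ℕ := Finsupp.single (0 : Fin a) d with hl0
  have hl0mem : l0 ∈ finsuppAntidiag (univ : Finset (Fin a)) d := by
    rw [Finset.mem_finsuppAntidiag]
    refine ⟨?_, Finset.subset_univ _⟩
    rw [hl0]
    rw [Fintype.sum_eq_single (0 : Fin a)
      (fun j hj => Finsupp.single_eq_of_ne' (Ne.symm hj))]
    exact Finsupp.single_eq_same
  have Qcoeff0 : (Qpoly a r n f0).coeff d = ((d.factorial : ℚ))⁻¹ := by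
    unfold Qpoly
    rw [if_pos (by rw [hSf0]; exact hn)]
    have hd0 : n - r * ∑ j, f0 j = d := by rw [hSf0]
    rw [hd0, Polynomial.finset_sum_coeff]
    have hzero : ∀ l ∈ finsuppAntidiag (univ : Finset (Fin a)) d, l ≠ l0 →
        (∏ j, Rpoly (f0 j) (l j)).coeff d = 0 := by
      intro l hl hne
      rw [Finset.mem_finsuppAntidiag] at hl
      have hex : ∃ j : Fin a, j ≠ 0 ∧ l j ≠ 0 := by
        by_contra hcon
        push_neg at hcon
        apply hne
        ext j
        by_cases hj : j = 0
        · subst hj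
          have hs : ∑ j, l j = l 0 := Fintype.sum_eq_single 0 (fun j hj => hcon j hj)
          have hsum : ∑ j, l j = d := hl.1
          rw [hl0, Finsupp.single_eq_same]
          omega
        · rw [hl0, Finsupp.single_eq_of_ne' (Ne.symm hj)]
          exact hcon j hj
      obtain ⟨j1, hj1, hlj1⟩ := hex
      apply Polynomial.coeff_eq_zero_of_degree_lt
      refine lt_of_le_of_lt (term_deg f0 (fun j => by simp [hf0]) l) ?_
      rw [Nat.cast_lt]
      have hj1v : j1.val ≠ 0 := fun h => hj1 (Fin.ext h)
      calc ∑ j, l j / f0 j < ∑ j, l j := by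
            refine Finset.sum_lt_sum (fun j _ => Nat.div_le_self _ _)
              ⟨j1, mem_univ _, ?_⟩
            exact Nat.div_lt_self (Nat.pos_of_ne_zero hlj1) (by simp only [hf0]; omega)
        _ = d := hl.1
    rw [Finset.sum_eq_single_of_mem l0 hl0mem hzero]
    have hone : ∀ j ∈ (univ : Finset (Fin a)), j ≠ 0 → Rpoly (f0 j) (l0 j) = 1 := by
      intro j _ hj
      rw [hl0, Finsupp.single_eq_of_ne' (Ne.symm hj), Rpoly_zero]
    have hprod : ∏ j, Rpoly (f0 j) (l0 j) = Rpoly 1 d := by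
      rw [Finset.prod_eq_single_of_mem (0 : Fin a) (mem_univ _) hone]
      rw [hl0]
      have h1 : f0 (0 : Fin a) = 1 := by simp [hf0]
      have h2 : (Finsupp.single (0 : Fin a) d) (0 : Fin a) = d := Finsupp.single_eq_same
      rw [h1, h2]
    rw [hprod, Rpoly_coeff_self]
  -- assemble
  have Pdeg_le : P.degree ≤ (d : WithBot ℕ) := by
    rw [hP]
    exact (Polynomial.degree_sum_le _ _).trans (Finset.sup_le_iff.mpr Qdeg)
  have Pcoeff : P.coeff d = (d.factorial : ℚ)⁻¹ := by
    rw [hP, Polynomial.finset_sum_coeff,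
      Finset.sum_eq_single_of_mem f0 hf0mem (fun f hf hne => Qcoeff f hf hne), Qcoeff0]
  have hPne : P.coeff d ≠ 0 := by
    rw [Pcoeff]
    exact inv_ne_zero (by exact_mod_cast d.factorial_ne_zero)
  have Pdeg : P.degree = (d : WithBot ℕ) := le_antisymm Pdeg_le
    (Polynomial.le_degree_of_ne_zero hPne)
  refine ⟨P, Pdeg, ?_, ?_⟩
  · rw [Polynomial.leadingCoeff, Polynomial.natDegree_eq_of_degree_eq_some Pdeg, Pcoeff]
  · intro k
    rw [hP, Polynomial.eval_finset_sum, Acoeff]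
    refine Finset.sum_congr rfl fun f hf => ?_
    rw [PowerSeries.coeff_X_pow_mul']
    unfold Qpoly
    split_ifs with hc
    · rw [PowerSeries.coeff_prod, Polynomial.eval_finset_sum]
      refine Finset.sum_congr rfl fun l hl => ?_
      rw [Polynomial.eval_prod]
      refine Finset.prod_congr rfl fun j _ => ?_
      exact coeff_dFac (f j) (Finset.mem_Icc.mp ((mem_strictTuples hf).1 j)).1 k (l j)
    · simp
end
end

section
/- Let k, r ∈ ℕ. In the ring ℚ⟦q⟧⟦X⟧ of formal power series, exp( Σ_{n≥1} ((−1)^{n+1}/n) · 𝒜_{1,nk,nr}(q) · X^n ) = Σ_{j≥0} 𝒜_{j,k,r}(q) · X^j, where 𝒜_{0,k,r}(q) := 1. In particular, for each a ∈ ℕ, 𝒜_{a,k,r} is a polynomial with rational coefficients in the series 𝒜_{1,nk,nr} for 1 ≤ n ≤ a. -/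
open PowerSeries Finset
open scoped Classical

noncomputable section

/-- The exponential of a power series `f ∈ ℚ⟦q⟧⟦X⟧` with zero constant term (in `X`):
`exp f = Σ_{m≥0} f^m / m!`.  Since `f` has no constant term, `f^m` has `X`-order at least
`m`, so the coefficient of `X^j` only involves `f^m` for `m ≤ j`. -/
def expX (f : PowerSeries (PowerSeries ℚ)) : PowerSeries (PowerSeries ℚ) :=
  PowerSeries.mk fun j => ∑ m ∈ Finset.range (j + 1),
    ((m.factorial : ℚ)⁻¹) • (PowerSeries.coeff j (f ^ m))

/-- The power series `𝒜_{a,k,r}(q) ∈ ℚ⟦q⟧`; note `𝒜_{0,k,r} = 1`. -/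
def Aser (a : ℕ) (k : ℤ) (r : ℕ) : PowerSeries ℚ := PowerSeries.mk (Acoeff a k r)

namespace AEP

lemma coeff_dF {R : Type*} [CommSemiring R] (f : PowerSeries R) (n : ℕ) :
    PowerSeries.coeff n (PowerSeries.derivativeFun f) = PowerSeries.coeff (n + 1) f * (n + 1) :=
  PowerSeries.coeff_derivative f n

lemma dF_C {R : Type*} [CommSemiring R] (r : R) :
    PowerSeries.derivativeFun (PowerSeries.C r) = 0 :=
  PowerSeries.derivative_C

/-- the single factor `q^{rn}/(1-q^n)^k`. -/
def tS (k r n : ℕ) : PowerSeries ℚ := (X : PowerSeries ℚ) ^ (r * n) * dFac n (k : ℤ)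

lemma dFac_nat (n k : ℕ) : dFac n (k : ℤ) = ((1 - (X : PowerSeries ℚ) ^ n)⁻¹) ^ k := by
  simp [dFac]

lemma tS_pow (k r n m : ℕ) :
    tS k r n ^ m = (X : PowerSeries ℚ) ^ ((m * r) * n) * dFac n ((m * k : ℕ) : ℤ) := by
  rw [tS, dFac_nat, dFac_nat, mul_pow, ← pow_mul, ← pow_mul]
  congr 2 <;> ring

lemma tS_eq_pow (k r n m : ℕ) : tS (m * k) (m * r) n = tS k r n ^ m := by
  rw [tS_pow, tS]

lemma X_pow_dvd_tS_pow (k r n m : ℕ) (hr : 1 ≤ r) (hm : 1 ≤ m) :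
    (X : PowerSeries ℚ) ^ n ∣ tS k r n ^ m := by
  rw [tS_pow]
  exact Dvd.dvd.mul_right (pow_dvd_pow _ (by simpa using Nat.mul_le_mul (Nat.mul_le_mul hm hr) (le_refl n))) _

lemma Acoeff_eq (k r a M : ℕ) :
    Acoeff a (k : ℤ) r M =
      ∑ T ∈ powersetCard a (Icc 1 M), PowerSeries.coeff M (∏ n ∈ T, tS k r n) := by
  rw [Acoeff]
  apply Finset.sum_bij (i := fun f _ => Finset.image f Finset.univ)
  · intro f hf
    rw [strictTuples, Finset.mem_filter, Fintype.mem_piFinset] at hf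
    rw [mem_powersetCard]
    constructor
    · intro x hx
      rcases Finset.mem_image.mp hx with ⟨j, _, rfl⟩
      exact hf.1 j
    · rw [Finset.card_image_of_injective _ hf.2.injective, Finset.card_univ, Fintype.card_fin]
  · intro f hf g hg h
    rw [strictTuples, Finset.mem_filter] at hf hg
    have h' : Set.range f = Set.range g := by
      have := congrArg (fun s : Finset ℕ => (s : Set ℕ)) h
      simpa [Set.image_univ] using this
    haveI : WellFoundedLT (Fin a) := inferInstance
    exact Set.range_injOn_strictMono hf.2 hg.2 h'
  · intro T hT
    rw [mem_powersetCard] at hT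
    refine ⟨T.orderEmbOfFin hT.2, ?_, ?_⟩
    · rw [strictTuples, Finset.mem_filter, Fintype.mem_piFinset]
      exact ⟨fun j => hT.1 (T.orderEmbOfFin_mem hT.2 j), (T.orderEmbOfFin hT.2).strictMono⟩
    · apply Finset.coe_injective
      rw [Finset.coe_image, Finset.coe_univ, Set.image_univ, Finset.range_orderEmbOfFin]
  · intro f hf
    rw [strictTuples, Finset.mem_filter] at hf
    congr 1
    rw [Finset.prod_image fun x _ y _ h => hf.2.injective h]
    simp only [tS]
    rw [Finset.prod_mul_distrib, Finset.prod_pow_eq_pow_sum, ← Finset.mul_sum]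


lemma coeff_tS_prod_zero {M : ℕ} {T : Finset ℕ} (k r : ℕ) (hr : 1 ≤ r) {n : ℕ} (hn : n ∈ T)
    (hM : M < n) : PowerSeries.coeff M (∏ i ∈ T, tS k r i) = 0 := by
  have h1 : (X : PowerSeries ℚ) ^ n ∣ ∏ i ∈ T, tS k r i :=
    dvd_trans (by simpa using X_pow_dvd_tS_pow k r n 1 hr le_rfl) (Finset.dvd_prod_of_mem _ hn)
  exact (PowerSeries.X_pow_dvd_iff.mp h1) M hM

lemma coeff_Aser (k r a M N : ℕ) (hr : 1 ≤ r) (hMN : M ≤ N) :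
    PowerSeries.coeff M (Aser a (k : ℤ) r) =
      PowerSeries.coeff M (∑ T ∈ powersetCard a (Icc 1 N), ∏ n ∈ T, tS k r n) := by
  rw [Aser, coeff_mk, Acoeff_eq, map_sum]
  apply Finset.sum_subset (powersetCard_mono (Finset.Icc_subset_Icc_right hMN))
  intro T hT hT'
  rw [mem_powersetCard] at hT hT'
  obtain ⟨n, hnT, hn⟩ : ∃ n ∈ T, M < n := by
    by_contra hc
    push_neg at hc
    exact hT' ⟨fun x hx => Finset.mem_Icc.mpr ⟨(Finset.mem_Icc.mp (hT.1 hx)).1, hc x hx⟩, hT.2⟩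
  exact coeff_tS_prod_zero k r hr hnT hn

lemma coeff_Aser_one (k r n M N : ℕ) (hr : 1 ≤ r) (hn : 1 ≤ n) (hMN : M ≤ N) :
    PowerSeries.coeff M (Aser 1 ((n * k : ℕ) : ℤ) (n * r)) =
      PowerSeries.coeff M (∑ m ∈ Icc 1 N, tS k r m ^ n) := by
  have hnr : 1 ≤ n * r := by nlinarith
  rw [Aser, coeff_mk]
  have h1 : Acoeff 1 ((n * k : ℕ) : ℤ) (n * r) M =
      ∑ T ∈ powersetCard 1 (Icc 1 M), PowerSeries.coeff M (∏ i ∈ T, tS (n * k) (n * r) i) :=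
    Acoeff_eq (n * k) (n * r) 1 M
  rw [h1, map_sum]
  have h2 : ∀ m : ℕ, ∏ i ∈ ({m} : Finset ℕ), tS (n * k) (n * r) i = tS k r m ^ n := by
    intro m; rw [Finset.prod_singleton, tS_eq_pow]
  -- sum over powersetCard 1 = sum over singletons
  rw [Finset.powersetCard_one]
  rw [Finset.sum_map]
  have h3 : ∀ m ∈ Icc 1 M, PowerSeries.coeff M
      (∏ i ∈ ({m} : Finset ℕ), tS (n * k) (n * r) i) = PowerSeries.coeff M (tS k r m ^ n) := by
    intro m _; rw [h2]
  simp only [Function.Embedding.coeFn_mk]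
  rw [Finset.sum_congr rfl h3]
  apply Finset.sum_subset (Finset.Icc_subset_Icc_right hMN)
  intro m hm hm'
  have hMm : M < m := by
    rcases Finset.mem_Icc.mp hm with ⟨h1m, _⟩
    by_contra hc; push_neg at hc
    exact hm' (Finset.mem_Icc.mpr ⟨h1m, hc⟩)
  have hdvd := X_pow_dvd_tS_pow k r m n hr hn
  exact (PowerSeries.X_pow_dvd_iff.mp hdvd) M hMm


abbrev Q2 := PowerSeries (PowerSeries ℚ)

instance : CharZero (PowerSeries ℚ) := by
  constructor
  intro a b h
  have := congrArg (PowerSeries.constantCoeff) h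
  simpa using this

lemma coeff_pow_zero {f : Q2} (hf : PowerSeries.constantCoeff f = 0) {l m : ℕ} (h : l < m) :
    PowerSeries.coeff l (f ^ m) = 0 := by
  have h1 : (X : Q2) ^ m ∣ f ^ m := pow_dvd_pow_of_dvd (PowerSeries.X_dvd_iff.mpr hf) m
  exact PowerSeries.X_pow_dvd_iff.mp h1 l h

lemma D_X : PowerSeries.derivativeFun (X : Q2) = 1 := PowerSeries.derivative_X

lemma D_pow (f : Q2) (m : ℕ) :
    PowerSeries.derivativeFun (f ^ (m + 1)) = (m + 1 : ℕ) • (f ^ m * PowerSeries.derivativeFun f) := by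
  induction m with
  | zero => simp
  | succ m ih =>
    rw [pow_succ, PowerSeries.derivativeFun_mul, ih]
    simp only [smul_eq_mul, nsmul_eq_mul, Nat.cast_add, Nat.cast_one]
    ring

lemma coeff_expX (f : Q2) (j : ℕ) :
    PowerSeries.coeff j (expX f) =
      ∑ m ∈ Finset.range (j + 1),
        ((m.factorial : ℚ)⁻¹) • (PowerSeries.coeff j (f ^ m)) := by
  rw [expX, coeff_mk]

lemma D_expX (f : Q2) (hf : PowerSeries.constantCoeff f = 0) :
    PowerSeries.derivativeFun (expX f) = PowerSeries.derivativeFun f * expX f := by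
  refine PowerSeries.ext fun n => ?_
  rw [AEP.coeff_dF, coeff_expX, PowerSeries.coeff_mul]
  -- LHS : (∑ m ∈ range (n+2), (m!)⁻¹ • coeff (n+1) (f^m)) * (n+1)
  rw [Finset.sum_mul, Finset.sum_range_succ']
  have hzero : ((Nat.factorial 0 : ℚ)⁻¹ • PowerSeries.coeff (n+1) (f ^ 0)) *
      ((n : PowerSeries ℚ) + 1) = 0 := by
    simp [PowerSeries.coeff_one]
  rw [hzero, add_zero]
  have hterm : ∀ m, (((m+1).factorial : ℚ)⁻¹ • PowerSeries.coeff (n+1) (f ^ (m+1)))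
      * ((n : PowerSeries ℚ) + 1) =
      ((m.factorial : ℚ)⁻¹) • PowerSeries.coeff n
        (f ^ m * PowerSeries.derivativeFun f) := by
    intro m
    rw [smul_mul_assoc]
    have h1 : PowerSeries.coeff (n+1) (f ^ (m+1)) * ((n : PowerSeries ℚ) + 1) =
        PowerSeries.coeff n (PowerSeries.derivativeFun (f ^ (m+1))) := by
      rw [AEP.coeff_dF]
    rw [h1, D_pow, map_nsmul]
    rw [← Nat.cast_smul_eq_nsmul ℚ, smul_smul]
    congr 1
    rw [Nat.factorial_succ, Nat.cast_mul, mul_inv, mul_assoc]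
    have hne : ((m : ℚ) + 1) ≠ 0 := Nat.cast_add_one_ne_zero m
    push_cast
    field_simp
  rw [Finset.sum_congr rfl fun m _ => hterm m]
  -- RHS side
  have hr2 : ∀ p ∈ Finset.HasAntidiagonal.antidiagonal n,
      PowerSeries.coeff p.1 (PowerSeries.derivativeFun f) *
        PowerSeries.coeff p.2 (expX f) =
      ∑ m ∈ Finset.range (n + 1), ((m.factorial : ℚ)⁻¹) •
        (PowerSeries.coeff p.1 (PowerSeries.derivativeFun f) *
          PowerSeries.coeff p.2 (f ^ m)) := by
    intro p hp
    have hp2 : p.2 ≤ n := by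
      rw [Finset.HasAntidiagonal.mem_antidiagonal] at hp; omega
    rw [coeff_expX, Finset.mul_sum]
    rw [Finset.sum_subset (Finset.range_subset_range.mpr (by omega : p.2 + 1 ≤ n + 1))]
    · exact Finset.sum_congr rfl fun m _ => by rw [mul_smul_comm]
    · intro m hm hm'
      have : p.2 < m := by simp only [Finset.mem_range] at hm hm'; omega
      rw [coeff_pow_zero hf this, smul_zero, mul_zero]
  rw [Finset.sum_congr rfl hr2, Finset.sum_comm]
  apply Finset.sum_congr rfl
  intro m _
  rw [← Finset.smul_sum]
  congr 1
  rw [mul_comm (f ^ m), PowerSeries.coeff_mul]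

lemma ODE_unique (g F G : Q2)
    (hF : PowerSeries.derivativeFun F = g * F) (hG : PowerSeries.derivativeFun G = g * G)
    (h0 : PowerSeries.coeff 0 F = PowerSeries.coeff 0 G) :
    F = G := by
  refine PowerSeries.ext fun n => ?_
  induction n using Nat.strong_induction_on with
  | _ n ih =>
    match n with
    | 0 => exact h0
    | Nat.succ n =>
      have h1 : PowerSeries.coeff n (PowerSeries.derivativeFun F) =
          PowerSeries.coeff n (PowerSeries.derivativeFun G) := by
        rw [hF, hG, PowerSeries.coeff_mul, PowerSeries.coeff_mul]
        refine Finset.sum_congr rfl fun p hp => ?_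
        rw [Finset.HasAntidiagonal.mem_antidiagonal] at hp
        rw [ih p.2 (by omega)]
      rw [AEP.coeff_dF, AEP.coeff_dF] at h1
      have h2 : ((n : PowerSeries ℚ) + 1) ≠ 0 := by
        exact_mod_cast Nat.cast_add_one_ne_zero (R := PowerSeries ℚ) n
      exact mul_right_cancel₀ h2 h1

lemma geo_mul (a : PowerSeries ℚ) :
    (1 + PowerSeries.C a * X) * (PowerSeries.mk fun n => (-a) ^ n) = 1 := by
  ext n
  rw [add_mul, one_mul, map_add, mul_assoc]
  cases n with
  | zero => simp
  | succ n =>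
    rw [PowerSeries.coeff_C_mul, PowerSeries.coeff_succ_X_mul, coeff_mk, coeff_mk,
      PowerSeries.coeff_one]
    simp only [Nat.succ_ne_zero, if_false]
    rw [pow_succ]
    ring

lemma D_prod (s : Finset ℕ) (t : ℕ → PowerSeries ℚ) :
    PowerSeries.derivativeFun (∏ i ∈ s, (1 + PowerSeries.C (t i) * X)) =
      (∑ i ∈ s, PowerSeries.C (t i) * (PowerSeries.mk fun n => (-(t i)) ^ n)) *
        ∏ i ∈ s, (1 + PowerSeries.C (t i) * X) := by
  induction s using Finset.cons_induction with
  | empty => simp [PowerSeries.derivativeFun_one]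
  | cons i s his ih =>
    rw [Finset.prod_cons, PowerSeries.derivativeFun_mul, ih, Finset.sum_cons]
    have hD : PowerSeries.derivativeFun (1 + PowerSeries.C (t i) * X) =
        PowerSeries.C (t i) := by
      rw [PowerSeries.derivativeFun_add, PowerSeries.derivativeFun_one,
        PowerSeries.derivativeFun_mul, D_X, AEP.dF_C]
      simp
    rw [hD]
    simp only [smul_eq_mul]
    linear_combination (-(PowerSeries.C (t i) *
      ∏ j ∈ s, (1 + PowerSeries.C (t j) * X))) * geo_mul (t i)

lemma coeff_prod_one_add (s : Finset ℕ) (t : ℕ → PowerSeries ℚ) (j : ℕ) :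
    PowerSeries.coeff j (∏ i ∈ s, (1 + PowerSeries.C (t i) * X)) =
      ∑ T ∈ powersetCard j s, ∏ i ∈ T, t i := by
  have h1 : ∀ i, (1 + PowerSeries.C (t i) * X) =
      (PowerSeries.C (t i) * X + 1) := fun i => by ring
  simp only [h1]
  rw [Finset.prod_add]
  simp only [Finset.prod_const_one, mul_one]
  rw [map_sum]
  have h2 : ∀ T ∈ s.powerset, PowerSeries.coeff j
      (∏ i ∈ T, PowerSeries.C (t i) * X) =
      if T.card = j then ∏ i ∈ T, t i else 0 := by
    intro T _
    rw [Finset.prod_mul_distrib, Finset.prod_const, ← map_prod, PowerSeries.coeff_C_mul,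
      PowerSeries.coeff_X_pow]
    by_cases h : T.card = j
    · simp [h]
    · simp [h, Ne.symm h]
  rw [Finset.sum_congr rfl h2, ← Finset.sum_filter, ← Finset.powersetCard_eq_filter]


def pSer (k r N n : ℕ) : PowerSeries ℚ := ∑ m ∈ Icc 1 N, tS k r m ^ n

def fN (k r N : ℕ) : Q2 := PowerSeries.mk fun n =>
  if n = 0 then 0 else ((-1 : ℚ) ^ (n + 1) / n) • pSer k r N n

lemma constantCoeff_fN (k r N : ℕ) : PowerSeries.constantCoeff (fN k r N) = 0 := by
  rw [← PowerSeries.coeff_zero_eq_constantCoeff_apply, fN, coeff_mk]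
  simp

lemma D_fN (k r N : ℕ) :
    PowerSeries.derivativeFun (fN k r N) =
      ∑ m ∈ Icc 1 N, PowerSeries.C (tS k r m) *
        (PowerSeries.mk fun n => (-(tS k r m)) ^ n) := by
  refine PowerSeries.ext fun n => ?_
  rw [AEP.coeff_dF, fN, coeff_mk, if_neg (Nat.succ_ne_zero n), map_sum]
  have hR : ∀ m ∈ Icc 1 N, PowerSeries.coeff n
      (PowerSeries.C (tS k r m) * PowerSeries.mk fun i => (-(tS k r m)) ^ i) =
      tS k r m * (-(tS k r m)) ^ n := by
    intro m _
    rw [PowerSeries.coeff_C_mul, coeff_mk]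
  rw [Finset.sum_congr rfl hR, pSer, Finset.smul_sum, Finset.sum_mul]
  apply Finset.sum_congr rfl
  intro m _
  rw [PowerSeries.smul_eq_C_mul]
  have hcast : ((n : PowerSeries ℚ) + 1) = PowerSeries.C ((n : ℚ) + 1) := by
    rw [map_add, map_one, map_natCast]
  rw [hcast, mul_assoc, mul_comm (tS k r m ^ (n + 1)), ← mul_assoc, ← map_mul]
  have hsc : ((-1 : ℚ) ^ (n + 1 + 1) / ((n + 1 : ℕ) : ℚ)) * ((n : ℚ) + 1) = (-1 : ℚ) ^ n := by
    have hne : ((n : ℚ) + 1) ≠ 0 := Nat.cast_add_one_ne_zero n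
    push_cast
    field_simp
    ring
  rw [hsc]
  have hC : PowerSeries.C ((-1 : ℚ) ^ n) = (-1 : PowerSeries ℚ) ^ n := by
    rw [map_pow, map_neg, map_one]
  rw [hC, neg_pow]
  ring

lemma expX_fN (k r N : ℕ) :
    expX (fN k r N) = ∏ m ∈ Icc 1 N, (1 + PowerSeries.C (tS k r m) * X) := by
  apply ODE_unique (∑ m ∈ Icc 1 N, PowerSeries.C (tS k r m) *
    (PowerSeries.mk fun n => (-(tS k r m)) ^ n))
  · rw [D_expX _ (constantCoeff_fN k r N), D_fN]
  · exact D_prod _ _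
  · have h00 : ∑ m ∈ Finset.range (0 + 1), ((m.factorial : ℚ)⁻¹) •
        (PowerSeries.coeff 0 ((fN k r N) ^ m)) = 1 := by
      rw [Finset.sum_range_one]
      simp
    rw [coeff_expX, h00, PowerSeries.coeff_zero_eq_constantCoeff_apply, map_prod]
    symm
    have : ∀ m ∈ Icc 1 N, PowerSeries.constantCoeff
        (1 + PowerSeries.C (tS k r m) * X) = 1 := by
      intro m _
      rw [map_add, map_one, map_mul, PowerSeries.constantCoeff_X, mul_zero, add_zero]
    rw [Finset.prod_congr rfl this, Finset.prod_const_one]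

lemma pow_congr {f g : Q2} {N : ℕ}
    (h : ∀ n, (X : PowerSeries ℚ) ^ (N + 1) ∣
      (PowerSeries.coeff n f - PowerSeries.coeff n g))
    (m j : ℕ) : (X : PowerSeries ℚ) ^ (N + 1) ∣
      (PowerSeries.coeff j (f ^ m) - PowerSeries.coeff j (g ^ m)) := by
  induction m generalizing j with
  | zero => simp
  | succ m ih =>
    have hf1 : f ^ (m + 1) = f * f ^ m := pow_succ' f m
    have hg1 : g ^ (m + 1) = g * g ^ m := pow_succ' g m
    rw [hf1, hg1, PowerSeries.coeff_mul, PowerSeries.coeff_mul, ← Finset.sum_sub_distrib]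
    apply Finset.dvd_sum
    intro p _
    have key : PowerSeries.coeff p.1 f * PowerSeries.coeff p.2 (f ^ m)
        - PowerSeries.coeff p.1 g * PowerSeries.coeff p.2 (g ^ m)
        = PowerSeries.coeff p.1 f *
            (PowerSeries.coeff p.2 (f ^ m) - PowerSeries.coeff p.2 (g ^ m))
          + (PowerSeries.coeff p.1 f - PowerSeries.coeff p.1 g) *
              PowerSeries.coeff p.2 (g ^ m) := by ring
    rw [key]
    exact dvd_add (Dvd.dvd.mul_left (ih p.2) _) (Dvd.dvd.mul_right (h p.1) _)

end AEP

open AEP in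
/-- the quasi-shuffle exponential identity for `𝒜`, from the proof of
Proposition 3.1.  For `k, r ∈ ℕ` (positive), in `ℚ⟦q⟧⟦X⟧`:
`exp(Σ_{n≥1} ((-1)^{n+1}/n) 𝒜_{1,nk,nr}(q) Xⁿ) = Σ_{j≥0} 𝒜_{j,k,r}(q) X^j`
(with `𝒜_{0,k,r} = 1`).  In particular each `𝒜_{a,k,r}` is a polynomial with rational
coefficients in the series `𝒜_{1,nk,nr}`, `1 ≤ n ≤ a`. -/
theorem A_exp_identity (k r : ℕ) (hk : 1 ≤ k) (hr : 1 ≤ r) :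
    expX (PowerSeries.mk fun n =>
        if n = 0 then 0 else ((-1 : ℚ) ^ (n + 1) / n) • Aser 1 ((n * k : ℕ) : ℤ) (n * r)) =
      PowerSeries.mk (fun j => Aser j (k : ℤ) r) ∧
    ∀ a : ℕ, 1 ≤ a → ∃ Q : MvPolynomial (Fin a) ℚ,
      Aser a (k : ℤ) r =
        MvPolynomial.aeval
          (fun i : Fin a => Aser 1 ((((i : ℕ) + 1) * k : ℕ) : ℤ) (((i : ℕ) + 1) * r)) Q := by
  set fF : Q2 := PowerSeries.mk fun n =>
    if n = 0 then 0 else ((-1 : ℚ) ^ (n + 1) / n) • Aser 1 ((n * k : ℕ) : ℤ) (n * r) with hfF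
  have hdvd : ∀ N n, (X : PowerSeries ℚ) ^ (N + 1) ∣
      (PowerSeries.coeff n fF - PowerSeries.coeff n (fN k r N)) := by
    intro N n
    rw [hfF, coeff_mk, fN, coeff_mk]
    by_cases hn : n = 0
    · simp [hn]
    · simp only [hn, if_false]
      rw [← smul_sub, PowerSeries.smul_eq_C_mul]
      apply Dvd.dvd.mul_left
      rw [PowerSeries.X_pow_dvd_iff]
      intro M hM
      rw [map_sub, sub_eq_zero, pSer]
      exact coeff_Aser_one k r n M N hr (Nat.one_le_iff_ne_zero.mpr hn) (by omega)
  have hmain : expX fF = PowerSeries.mk fun j => Aser j (k : ℤ) r := by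
    refine PowerSeries.ext fun j => ?_
    refine PowerSeries.ext fun N => ?_
    rw [coeff_mk, coeff_expX]
    have hterm : ∀ m, PowerSeries.coeff N (PowerSeries.coeff j (fF ^ m)) =
        PowerSeries.coeff N (PowerSeries.coeff j ((fN k r N) ^ m)) := by
      intro m
      have h1 := pow_congr (hdvd N) m j
      have h2 := PowerSeries.X_pow_dvd_iff.mp h1 N (by omega)
      rw [map_sub, sub_eq_zero] at h2
      exact h2
    rw [map_sum]
    have hstep : ∀ m ∈ Finset.range (j + 1),
        PowerSeries.coeff N (((m.factorial : ℚ)⁻¹) •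
          PowerSeries.coeff j (fF ^ m)) =
        PowerSeries.coeff N (((m.factorial : ℚ)⁻¹) •
          PowerSeries.coeff j ((fN k r N) ^ m)) := by
      intro m _
      rw [map_smul, map_smul, hterm m]
    rw [Finset.sum_congr rfl hstep, ← map_sum, ← coeff_expX, expX_fN, coeff_prod_one_add]
    exact (coeff_Aser k r j N N hr le_rfl).symm
  refine ⟨hmain, ?_⟩
  intro a ha
  set v : Fin a → PowerSeries ℚ :=
    fun i => Aser 1 ((((i : ℕ) + 1) * k : ℕ) : ℤ) (((i : ℕ) + 1) * r) with hv
  suffices hmem : Aser a (k : ℤ) r ∈ Algebra.adjoin ℚ (Set.range v) by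
    rw [Algebra.adjoin_range_eq_range_aeval] at hmem
    obtain ⟨Q, hQ⟩ := hmem
    exact ⟨Q, hQ.symm⟩
  have hcf : ∀ m l, l ≤ a → PowerSeries.coeff l (fF ^ m) ∈
      Algebra.adjoin ℚ (Set.range v) := by
    intro m
    induction m with
    | zero =>
      intro l _
      rw [pow_zero]
      by_cases h0 : l = 0
      · subst h0; simp only [PowerSeries.coeff_zero_eq_constantCoeff_apply, map_one]
        exact one_mem _
      · rw [PowerSeries.coeff_one, if_neg h0]
        exact zero_mem _
    | succ m ih =>
      intro l hl
      have hl1 : fF ^ (m + 1) = fF * fF ^ m := pow_succ' fF m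
      rw [hl1, PowerSeries.coeff_mul]
      apply Subalgebra.sum_mem
      intro p hp
      rw [Finset.HasAntidiagonal.mem_antidiagonal] at hp
      apply Subalgebra.mul_mem
      · rw [hfF, coeff_mk]
        by_cases h0 : p.1 = 0
        · rw [if_pos h0]; exact zero_mem _
        · rw [if_neg h0]
          apply Subalgebra.smul_mem
          have hle : p.1 - 1 < a := by omega
          have hval : Aser 1 ((p.1 * k : ℕ) : ℤ) (p.1 * r) = v ⟨p.1 - 1, hle⟩ := by
            have hq : (((⟨p.1 - 1, hle⟩ : Fin a) : ℕ) + 1) = p.1 := by simp; omega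
            rw [hv]
            simp only [hq]
          rw [hval]
          exact Algebra.subset_adjoin (Set.mem_range_self _)
      · exact ih p.2 (by omega)
  have ha2 : Aser a (k : ℤ) r = PowerSeries.coeff a (expX fF) := by
    rw [hmain, coeff_mk]
  rw [ha2, coeff_expX]
  exact Subalgebra.sum_mem _ fun m _ => Subalgebra.smul_mem _ (hcf m a le_rfl) _
end
end

section
/- Let k, r ∈ ℕ. In the ring ℚ⟦q⟧⟦X⟧ of formal power series, exp( Σ_{n≥1} (1/n) · 𝒜_{1,nk,nr}(q) · X^n ) = Σ_{j≥0} 𝒜*_{j,k,r}(q) · X^j, where 𝒜*_{0,k,r}(q) := 1; equivalently, 𝒜*_{a,k,r}(q) is the coefficient of X^a in exp( Σ_{n≥1} 𝒜_{1,nk,nr}(q) X^n / n ). -/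
open PowerSeries Finset
open scoped Classical

noncomputable section

set_option linter.unusedSectionVars false
set_option maxHeartbeats 1000000

variable {A : Type*} [CommRing A] [Algebra ℚ A]

def expE (f : PowerSeries A) : PowerSeries A :=
  PowerSeries.mk fun j => ∑ m ∈ Finset.range (j + 1),
    ((m.factorial : ℚ)⁻¹) • (PowerSeries.coeff j (f ^ m))

lemma coeff_pow_eq_zero {f : PowerSeries A} (hf : constantCoeff f = 0)
    {j m : ℕ} (h : j < m) : coeff j (f ^ m) = 0 := by
  have h1 : (X : PowerSeries A) ^ m ∣ f ^ m :=
    pow_dvd_pow_of_dvd (X_dvd_iff.mpr hf) m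
  exact X_pow_dvd_iff.mp h1 j h

lemma coeff_expE {f : PowerSeries A} (hf : constantCoeff f = 0)
    {j M : ℕ} (h : j < M) :
    coeff j (expE f) = ∑ m ∈ Finset.range M, ((m.factorial : ℚ)⁻¹) • (coeff j (f ^ m)) := by
  rw [expE, coeff_mk]
  refine Finset.sum_subset (Finset.range_subset_range.mpr h) ?_
  intro m _ hm
  rw [coeff_pow_eq_zero hf (by simpa using hm), smul_zero]

lemma coeff_mul_pows_eq_zero {f g : PowerSeries A} (hf : constantCoeff f = 0)
    (hg : constantCoeff g = 0) {j i l : ℕ} (h : j < i + l) :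
    coeff j (f ^ i * g ^ l) = 0 := by
  have h1 : (X : PowerSeries A) ^ (i + l) ∣ f ^ i * g ^ l := by
    rw [pow_add]
    exact mul_dvd_mul (pow_dvd_pow_of_dvd (X_dvd_iff.mpr hf) i)
      (pow_dvd_pow_of_dvd (X_dvd_iff.mpr hg) l)
  exact X_pow_dvd_iff.mp h1 j h

lemma inv_fact_mul_choose {m i : ℕ} (h : i ≤ m) :
    ((m.factorial : ℚ))⁻¹ * (m.choose i : ℚ) =
      ((i.factorial : ℚ))⁻¹ * (((m - i).factorial : ℚ))⁻¹ := by
  have key : ((m.choose i : ℚ)) * (i.factorial : ℚ) * ((m - i).factorial : ℚ)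
      = (m.factorial : ℚ) := by
    exact_mod_cast congrArg (Nat.cast : ℕ → ℚ) (Nat.choose_mul_factorial_mul_factorial h)
  have h1 : (m.factorial : ℚ) ≠ 0 := Nat.cast_ne_zero.mpr m.factorial_ne_zero
  have h2 : (i.factorial : ℚ) ≠ 0 := Nat.cast_ne_zero.mpr i.factorial_ne_zero
  have h3 : ((m - i).factorial : ℚ) ≠ 0 := Nat.cast_ne_zero.mpr (m - i).factorial_ne_zero
  field_simp
  linarith [key]

lemma expE_add {f g : PowerSeries A} (hf : constantCoeff f = 0)
    (hg : constantCoeff g = 0) :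
    expE (f + g) = expE f * expE g := by
  ext j
  set c : ℕ → ℕ → A := fun i l =>
    ((i.factorial : ℚ))⁻¹ • (((l.factorial : ℚ))⁻¹ • coeff j (f ^ i * g ^ l)) with hc
  set T : Finset (ℕ × ℕ) :=
    ((Finset.range (j+1)) ×ˢ (Finset.range (j+1))).filter (fun p => p.1 + p.2 ≤ j) with hTdef
  have hvanish : ∀ i l : ℕ, j < i + l → c i l = 0 := by
    intro i l h
    rw [hc]
    simp only [coeff_mul_pows_eq_zero hf hg h, smul_zero]
  have RHS : coeff j (expE f * expE g) = ∑ p ∈ T, c p.1 p.2 := by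
    have step1 : coeff j (expE f * expE g) =
        ∑ i ∈ Finset.range (j+1), ∑ l ∈ Finset.range (j+1), c i l := by
      rw [coeff_mul]
      have : ∀ p ∈ antidiagonal j, (coeff p.1 (expE f)) * (coeff p.2 (expE g)) =
          ∑ i ∈ Finset.range (j+1), ∑ l ∈ Finset.range (j+1),
            ((i.factorial : ℚ))⁻¹ • (((l.factorial : ℚ))⁻¹ •
              (coeff p.1 (f ^ i) * coeff p.2 (g ^ l))) := by
        intro p hp
        rw [Finset.HasAntidiagonal.mem_antidiagonal] at hp
        rw [coeff_expE hf (by omega : p.1 < j + 1), coeff_expE hg (by omega : p.2 < j + 1),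
          Finset.sum_mul]
        refine Finset.sum_congr rfl fun i _ => ?_
        rw [Finset.mul_sum]
        refine Finset.sum_congr rfl fun l _ => ?_
        rw [smul_mul_assoc, mul_smul_comm]
      rw [Finset.sum_congr rfl this, Finset.sum_comm]
      refine Finset.sum_congr rfl fun i _ => ?_
      rw [Finset.sum_comm]
      refine Finset.sum_congr rfl fun l _ => ?_
      rw [← Finset.smul_sum, ← Finset.smul_sum, ← coeff_mul]
    rw [step1, ← Finset.sum_product']
    refine (Finset.sum_subset (Finset.filter_subset _ _) ?_).symm
    intro p hp hnp
    rw [Finset.mem_filter, not_and] at hnp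
    exact hvanish _ _ (lt_of_not_ge (hnp hp))
  have LHS : coeff j (expE (f + g)) = ∑ p ∈ T, c p.1 p.2 := by
    have step1 : coeff j (expE (f + g)) =
        ∑ m ∈ Finset.range (j+1), ∑ i ∈ Finset.range (m+1), c i (m - i) := by
      rw [expE, coeff_mk]
      refine Finset.sum_congr rfl fun m _ => ?_
      rw [add_pow]
      rw [map_sum, Finset.smul_sum]
      refine Finset.sum_congr rfl fun i hi => ?_
      rw [Finset.mem_range] at hi
      have : f ^ i * g ^ (m - i) * ((m.choose i : ℕ) : PowerSeries A)
          = (m.choose i : ℕ) • (f ^ i * g ^ (m - i)) := by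
        rw [nsmul_eq_mul, mul_comm]
      rw [this, map_nsmul, ← Nat.cast_smul_eq_nsmul ℚ, smul_smul, inv_fact_mul_choose (by omega),
        mul_smul]
    have hsig := Finset.sum_sigma (Finset.range (j+1)) (fun m => Finset.range (m+1))
      (fun x => c x.2 (x.1 - x.2))
    rw [step1, ← hsig]
    refine Finset.sum_nbij' (fun x => (x.2, x.1 - x.2)) (fun p => ⟨p.1 + p.2, p.1⟩)
      ?_ ?_ ?_ ?_ ?_
    · rintro ⟨m, i⟩ hx
      simp only [Finset.mem_sigma, Finset.mem_range] at hx
      simp only [hTdef, Finset.mem_filter, Finset.mem_product, Finset.mem_range]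
      omega
    · rintro ⟨i, l⟩ hp
      simp only [hTdef, Finset.mem_filter, Finset.mem_product, Finset.mem_range] at hp
      simp only [Finset.mem_sigma, Finset.mem_range]
      omega
    · rintro ⟨m, i⟩ hx
      simp only [Finset.mem_sigma, Finset.mem_range] at hx
      simp only [Sigma.mk.inj_iff, heq_eq_eq]
      exact ⟨by omega, trivial⟩
    · rintro ⟨i, l⟩ hp
      simp only [hTdef, Finset.mem_filter, Finset.mem_product, Finset.mem_range] at hp
      simp only [Prod.mk.injEq]
      exact ⟨trivial, by omega⟩
    · rintro ⟨m, i⟩ hx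
      rfl
  rw [LHS, RHS]

lemma expE_zero : expE (0 : PowerSeries A) = 1 := by
  ext j
  rw [expE, coeff_mk]
  rw [Finset.sum_eq_single 0]
  · simp
  · intro m _ hm
    rw [zero_pow hm, map_zero, smul_zero]
  · intro h
    exact absurd (Finset.mem_range.mpr (Nat.succ_pos j)) h

lemma expE_sum {ι : Type*} (s : Finset ι) (f : ι → PowerSeries A)
    (hf : ∀ i ∈ s, constantCoeff (f i) = 0) :
    expE (∑ i ∈ s, f i) = ∏ i ∈ s, expE (f i) := by
  classical
  induction s using Finset.cons_induction with
  | empty => simpa using expE_zero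
  | cons a s ha ih =>
      rw [Finset.sum_cons, Finset.prod_cons,
        expE_add (hf a (Finset.mem_cons_self a s)) ?_,
        ih (fun i hi => hf i (Finset.mem_cons_of_mem hi))]
      rw [map_sum]
      exact Finset.sum_eq_zero fun i hi => hf i (Finset.mem_cons_of_mem hi)

lemma expE_map {B : Type*} [CommRing B] [Algebra ℚ B] (φ : A →ₐ[ℚ] B)
    (f : PowerSeries A) :
    PowerSeries.map (φ : A →+* B) (expE f) = expE (PowerSeries.map (φ : A →+* B) f) := by
  ext j
  rw [coeff_map, expE, expE, coeff_mk, coeff_mk, map_sum]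
  refine Finset.sum_congr rfl fun m _ => ?_
  rw [← map_pow, coeff_map]
  exact map_smul φ _ _
lemma expE_rescale (c : A) (f : PowerSeries A) :
    expE (rescale c f) = rescale c (expE f) := by
  ext j
  rw [expE, expE, coeff_rescale, coeff_mk, coeff_mk, Finset.mul_sum]
  refine Finset.sum_congr rfl fun m _ => ?_
  rw [← map_pow, coeff_rescale, mul_smul_comm]

/-- `-log(1-X)` over `ℚ`. -/
def ellQ : PowerSeries ℚ := PowerSeries.mk fun n => if n = 0 then 0 else (1 : ℚ) / n

lemma constantCoeff_ellQ : constantCoeff ellQ = 0 := by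
  rw [← coeff_zero_eq_constantCoeff, ellQ, coeff_mk, if_pos rfl]

/-- the geometric series `Σ c^s X^s`. -/
def geom (c : A) : PowerSeries A := PowerSeries.mk fun s => c ^ s

lemma derivative_ellQ : derivativeFun ellQ = geom (1 : ℚ) := by
  ext n
  rw [show derivativeFun ellQ = d⁄dX ℚ ellQ from rfl, coeff_derivative, ellQ, geom, coeff_mk, coeff_mk, if_neg (Nat.succ_ne_zero n), one_pow]
  have : ((n : ℚ) + 1) ≠ 0 := by positivity
  push_cast
  field_simp

lemma deriv_pow_coeff (m j : ℕ) :
    coeff (j+1) (ellQ ^ (m+1)) * ((j : ℚ) + 1)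
      = ((m : ℚ) + 1) * coeff j (ellQ ^ m * geom 1) := by
  have h1 : coeff (j+1) (ellQ ^ (m+1)) * ((j : ℚ) + 1)
      = coeff j (derivativeFun (ellQ ^ (m+1))) := by
    rw [show derivativeFun (ellQ ^ (m+1)) = d⁄dX ℚ (ellQ ^ (m+1)) from rfl, coeff_derivative]
    try push_cast
    try ring
  have h2 : derivativeFun (ellQ ^ (m+1)) = (m+1) • (ellQ ^ m * geom 1) := by
    have h3 : derivativeFun (ellQ ^ (m+1)) = d⁄dX ℚ (ellQ ^ (m+1)) := rfl
    rw [h3, Derivation.leibniz_pow, Nat.add_sub_cancel, smul_eq_mul]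
    congr 1
    congr 1
    exact derivative_ellQ
  rw [h1, h2, map_nsmul, nsmul_eq_mul]
  push_cast
  ring

lemma coeff_expE_ellQ (n : ℕ) : coeff n (expE ellQ) = 1 := by
  induction n using Nat.strong_induction_on with
  | _ n ih =>
    match n with
    | 0 =>
        rw [expE, coeff_mk]
        simp
    | (j+1) =>
        have key : ((j : ℚ) + 1) * coeff (j+1) (expE ellQ)
            = ∑ m ∈ Finset.range (j+1),
                ((m.factorial : ℚ))⁻¹ * coeff j (ellQ ^ m * geom 1) := by
          rw [coeff_expE constantCoeff_ellQ (lt_add_one (j+1)), Finset.mul_sum,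
            Finset.sum_range_succ']
          have h0 : ((j:ℚ)+1) * (((Nat.factorial 0 : ℚ))⁻¹ • coeff (j+1) (ellQ ^ 0)) = 0 := by
            rw [pow_zero, coeff_one, if_neg (Nat.succ_ne_zero j)]
            simp
          rw [h0, add_zero]
          refine Finset.sum_congr rfl fun m _ => ?_
          rw [smul_eq_mul]
          have hfac : ((Nat.factorial (m+1) : ℚ))⁻¹ * ((m:ℚ)+1) = ((Nat.factorial m : ℚ))⁻¹ := by
            rw [Nat.factorial_succ]
            have h2 : ((m.factorial : ℚ)) ≠ 0 := Nat.cast_ne_zero.mpr m.factorial_ne_zero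
            have h3 : ((m:ℚ)+1) ≠ 0 := by positivity
            push_cast
            field_simp
          calc ((j:ℚ)+1) * (((Nat.factorial (m+1) : ℚ))⁻¹ * coeff (j+1) (ellQ ^ (m+1)))
              = ((Nat.factorial (m+1) : ℚ))⁻¹ * (coeff (j+1) (ellQ ^ (m+1)) * ((j:ℚ)+1)) := by
                ring
            _ = ((Nat.factorial (m+1) : ℚ))⁻¹ * (((m : ℚ) + 1) * coeff j (ellQ ^ m * geom 1)) := by
                rw [deriv_pow_coeff]
            _ = ((Nat.factorial m : ℚ))⁻¹ * coeff j (ellQ ^ m * geom 1) := by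
                rw [← hfac]; ring
        have S : ∑ m ∈ Finset.range (j+1),
            ((m.factorial : ℚ))⁻¹ * coeff j (ellQ ^ m * geom 1) = (j : ℚ) + 1 := by
          have expand : ∀ m, coeff j (ellQ ^ m * geom 1)
              = ∑ p ∈ antidiagonal j, coeff p.1 (ellQ ^ m) := by
            intro m
            rw [coeff_mul]
            refine Finset.sum_congr rfl fun p _ => ?_
            rw [geom, coeff_mk, one_pow, mul_one]
          simp only [expand, Finset.mul_sum]
          rw [Finset.sum_comm]
          have : ∀ p ∈ antidiagonal j, ∑ m ∈ Finset.range (j+1),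
              ((m.factorial : ℚ))⁻¹ * coeff p.1 (ellQ ^ m) = 1 := by
            intro p hp
            rw [Finset.HasAntidiagonal.mem_antidiagonal] at hp
            have hp1 : p.1 < j + 1 := by omega
            have := coeff_expE constantCoeff_ellQ hp1
            simp only [smul_eq_mul] at this
            rw [← this, ih p.1 (by omega)]
          rw [Finset.sum_congr rfl this, Finset.sum_const, Nat.card_antidiagonal]
          simp
        have hne : ((j : ℚ) + 1) ≠ 0 := by positivity
        have := key.trans S
        field_simp at this
        linarith [this]

lemma expE_ellQ : expE ellQ = geom (1 : ℚ) := by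
  ext n
  rw [coeff_expE_ellQ, geom, coeff_mk, one_pow]

/-- `-log (1 - c X)` -/
def Lc (c : A) : PowerSeries A :=
  PowerSeries.mk fun n => if n = 0 then 0 else ((1 : ℚ) / n) • c ^ n

lemma constantCoeff_Lc (c : A) : constantCoeff (Lc c) = 0 := by
  rw [← coeff_zero_eq_constantCoeff, Lc, coeff_mk, if_pos rfl]

lemma Lc_eq (c : A) : Lc c = rescale c (PowerSeries.map (algebraMap ℚ A) ellQ) := by
  ext n
  rw [Lc, coeff_mk, coeff_rescale, coeff_map, ellQ, coeff_mk]
  by_cases hn : n = 0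
  · rw [if_pos hn, if_pos hn, map_zero, mul_zero]
  · rw [if_neg hn, if_neg hn, Algebra.smul_def, mul_comm]

lemma expE_Lc (c : A) : expE (Lc c) = geom c := by
  have h1 : ((Algebra.ofId ℚ A : ℚ →ₐ[ℚ] A) : ℚ →+* A) = algebraMap ℚ A := rfl
  have h2 : PowerSeries.map (algebraMap ℚ A) (expE ellQ)
      = expE (PowerSeries.map (algebraMap ℚ A) ellQ) := by
    rw [← h1]; exact expE_map _ _
  rw [Lc_eq, expE_rescale, ← h2, expE_ellQ]
  ext n
  rw [coeff_rescale, coeff_map, geom, geom, coeff_mk, coeff_mk, one_pow, map_one, mul_one]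


/-- Weakly increasing `a`-tuples `1 ≤ n₁ ≤ n₂ ≤ ⋯ ≤ n_a ≤ N`. -/
def monoTuples (a N : ℕ) : Finset (Fin a → ℕ) :=
  (Fintype.piFinset fun _ : Fin a => Finset.Icc 1 N).filter fun f => Monotone f

/-- The coefficient of `q^N` in the weak-inequality analogue
`𝒜*_{a,k,r}(q) = Σ_{1≤n₁≤⋯≤n_a} q^{r(n₁+⋯+n_a)} / ∏_j (1-q^{n_j})^k`. -/
def AstarCoeff (a : ℕ) (k : ℤ) (r : ℕ) (N : ℕ) : ℚ :=
  ∑ f ∈ monoTuples a N,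
    PowerSeries.coeff N ((X : PowerSeries ℚ) ^ (r * ∑ j, f j) * ∏ j, dFac (f j) k)

/-- The power series `𝒜*_{a,k,r}(q) ∈ ℚ⟦q⟧`; note `𝒜*_{0,k,r} = 1` and
`𝒜*_{1,k,r} = 𝒜_{1,k,r}`. -/
def AstarSer (a : ℕ) (k : ℤ) (r : ℕ) : PowerSeries ℚ := PowerSeries.mk (AstarCoeff a k r)

lemma sum_mono_eq_sum_antidiag (v : ℕ → A) (N j : ℕ) :
    ∑ f ∈ monoTuples j N, ∏ i, v (f i)
      = ∑ l ∈ Finset.finsuppAntidiag (Finset.Icc 1 N) j, ∏ m ∈ Finset.Icc 1 N, v m ^ l m := by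
  classical
  refine Finset.sum_nbij'
    (fun f => Multiset.toFinsupp (Multiset.map f Finset.univ.val))
    (fun l => fun i : Fin j => ((Finsupp.toMultiset l).sort (· ≤ ·)).getD i 0)
    ?_ ?_ ?_ ?_ ?_
  · -- maps into finsuppAntidiag
    intro f hf
    rw [monoTuples, Finset.mem_filter, Fintype.mem_piFinset] at hf
    have hsub : (Multiset.map f Finset.univ.val).toFinset ⊆ Finset.Icc 1 N := by
      intro a ha
      rw [Multiset.mem_toFinset, Multiset.mem_map] at ha
      obtain ⟨i, _, rfl⟩ := ha
      exact hf.1 i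
    rw [Finset.mem_finsuppAntidiag]
    constructor
    · show ∑ m ∈ Finset.Icc 1 N, (Multiset.map f Finset.univ.val).count m = j
      rw [← Finset.sum_subset hsub (fun m _ hm =>
        Multiset.count_eq_zero_of_notMem (fun hmem => hm (Multiset.mem_toFinset.mpr hmem)))]
      rw [Multiset.toFinset_sum_count_eq]
      simp
    · show (Multiset.map f Finset.univ.val).toFinset ⊆ Finset.Icc 1 N
      exact hsub
  · -- maps into monoTuples
    intro l hl
    rw [Finset.mem_finsuppAntidiag] at hl
    have hlen : ((Finsupp.toMultiset l).sort (· ≤ ·)).length = j := by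
      rw [Multiset.length_sort, Finsupp.card_toMultiset]
      rw [← hl.1]
      exact Finsupp.sum_of_support_subset l hl.2 (fun _ n => n) (fun m _ => rfl)
    have hget : ∀ i : Fin j, ((Finsupp.toMultiset l).sort (· ≤ ·)).getD i 0
        ∈ Finset.Icc 1 N := by
      intro i
      have hi : (i : ℕ) < ((Finsupp.toMultiset l).sort (· ≤ ·)).length := by
        rw [hlen]; exact i.isLt
      rw [List.getD_eq_get _ _ ⟨_, hi⟩]
      have hmem : ((Finsupp.toMultiset l).sort (· ≤ ·)).get ⟨i, hi⟩ ∈ Finsupp.toMultiset l := by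
        rw [← Multiset.mem_sort (· ≤ ·)]
        exact List.get_mem _ _
      rw [Finsupp.mem_toMultiset] at hmem
      exact hl.2 hmem
    rw [monoTuples, Finset.mem_filter, Fintype.mem_piFinset]
    refine ⟨fun i => hget i, ?_⟩
    intro i i' hii'
    have hi : (i : ℕ) < ((Finsupp.toMultiset l).sort (· ≤ ·)).length := by
      rw [hlen]; exact i.isLt
    have hi' : (i' : ℕ) < ((Finsupp.toMultiset l).sort (· ≤ ·)).length := by
      rw [hlen]; exact i'.isLt
    show ((Finsupp.toMultiset l).sort (· ≤ ·)).getD i 0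
        ≤ ((Finsupp.toMultiset l).sort (· ≤ ·)).getD i' 0
    rw [List.getD_eq_get _ _ ⟨_, hi⟩, List.getD_eq_get _ _ ⟨_, hi'⟩]
    rcases lt_or_eq_of_le hii' with h | h
    · have hs := Multiset.pairwise_sort (Finsupp.toMultiset l) (· ≤ ·)
      rw [List.pairwise_iff_get] at hs
      exact hs ⟨i, hi⟩ ⟨i', hi'⟩ (by exact h)
    · cases h; rfl
  · -- left inverse
    intro f hf
    rw [monoTuples, Finset.mem_filter] at hf
    have hmono : Monotone f := hf.2
    have h1 : Multiset.map f Finset.univ.val = ↑(List.ofFn f) := Fin.univ_val_map f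
    have h2 : Finsupp.toMultiset (Multiset.toFinsupp (Multiset.map f Finset.univ.val))
        = ↑(List.ofFn f) := by rw [Multiset.toFinsupp_toMultiset, h1]
    have hsorted : (List.ofFn f).Pairwise (· ≤ ·) := hmono.sortedLE_ofFn.pairwise
    have h3 : ((↑(List.ofFn f) : Multiset ℕ).sort (· ≤ ·)) = List.ofFn f := by
      refine List.Perm.eq_of_pairwise' (Multiset.pairwise_sort _ _) hsorted ?_
      rw [← Multiset.coe_eq_coe, Multiset.sort_eq]
    funext i
    show ((Finsupp.toMultiset (Multiset.toFinsupp
        (Multiset.map f Finset.univ.val))).sort (· ≤ ·)).getD i 0 = f i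
    rw [h2, h3]
    have hi : (i : ℕ) < (List.ofFn f).length := by rw [List.length_ofFn]; exact i.isLt
    rw [List.getD_eq_get _ _ ⟨_, hi⟩, List.get_ofFn]
    congr 1
  · -- right inverse
    intro l hl
    rw [Finset.mem_finsuppAntidiag] at hl
    have hlen : ((Finsupp.toMultiset l).sort (· ≤ ·)).length = j := by
      rw [Multiset.length_sort, Finsupp.card_toMultiset]
      rw [← hl.1]
      exact Finsupp.sum_of_support_subset l hl.2 (fun _ n => n) (fun m _ => rfl)
    have h1 : List.ofFn (fun i : Fin j => ((Finsupp.toMultiset l).sort (· ≤ ·)).getD i 0)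
        = (Finsupp.toMultiset l).sort (· ≤ ·) := by
      refine List.ext_get (by rw [List.length_ofFn, hlen]) ?_
      intro n hn1 hn2
      rw [List.get_ofFn]
      exact List.getD_eq_get _ _ ⟨_, hn2⟩
    show Multiset.toFinsupp (Multiset.map
        (fun i : Fin j => ((Finsupp.toMultiset l).sort (· ≤ ·)).getD i 0) Finset.univ.val) = l
    rw [Fin.univ_val_map, h1, Multiset.sort_eq, Finsupp.toMultiset_toFinsupp]
  · -- values agree
    intro f hf
    rw [monoTuples, Finset.mem_filter, Fintype.mem_piFinset] at hf
    have hsub : (Multiset.map f Finset.univ.val).toFinset ⊆ Finset.Icc 1 N := by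
      intro a ha
      rw [Multiset.mem_toFinset, Multiset.mem_map] at ha
      obtain ⟨i, _, rfl⟩ := ha
      exact hf.1 i
    show ∏ i, v (f i) = ∏ m ∈ Finset.Icc 1 N,
        v m ^ (Multiset.map f Finset.univ.val).count m
    calc ∏ i, v (f i) = (Multiset.map (fun i => v (f i)) Finset.univ.val).prod := rfl
      _ = (Multiset.map v (Multiset.map f Finset.univ.val)).prod := by
          rw [Multiset.map_map]; rfl
      _ = ∏ m ∈ (Multiset.map f Finset.univ.val).toFinset,
            v m ^ (Multiset.map f Finset.univ.val).count m :=
          Finset.prod_multiset_map_count _ _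
      _ = ∏ m ∈ Finset.Icc 1 N, v m ^ (Multiset.map f Finset.univ.val).count m := by
          refine Finset.prod_subset hsub ?_
          intro m _ hm
          have hnm : m ∉ Multiset.map f Finset.univ.val :=
            fun hmem => hm (Multiset.mem_toFinset.mpr hmem)
          rw [Multiset.count_eq_zero_of_notMem hnm, pow_zero]

lemma coeff_prod_geom (v : ℕ → A) (N j : ℕ) :
    coeff j (∏ m ∈ Finset.Icc 1 N, geom (v m)) = ∑ f ∈ monoTuples j N, ∏ i, v (f i) := by
  rw [coeff_prod, sum_mono_eq_sum_antidiag]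
  refine Finset.sum_congr rfl fun l _ => Finset.prod_congr rfl fun m _ => ?_
  rw [geom, coeff_mk]

lemma expX_eq_expE (f : PowerSeries (PowerSeries ℚ)) : expX f = expE f := rfl

def uu (k r m : ℕ) : PowerSeries ℚ := X ^ (r * m) * dFac m (k : ℤ)

lemma dFac_mul_nat (n k m : ℕ) : dFac m ((n * k : ℕ) : ℤ) = dFac m (k : ℤ) ^ n := by
  rw [dFac, dFac, if_pos (by positivity : (0:ℤ) ≤ ((n * k : ℕ) : ℤ)),
    if_pos (by positivity : (0:ℤ) ≤ ((k:ℕ) : ℤ)), ← pow_mul]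
  congr 1
  rw [Int.toNat_natCast, Int.toNat_natCast]
  ring

lemma uu_pow (n k r m : ℕ) :
    (X : PowerSeries ℚ) ^ ((n * r) * m) * dFac m ((n * k : ℕ) : ℤ) = (uu k r m) ^ n := by
  rw [uu, mul_pow, ← pow_mul, dFac_mul_nat]
  congr 2
  ring

lemma X_pow_dvd_uu (k r m : ℕ) (hr : 1 ≤ r) : (X : PowerSeries ℚ) ^ m ∣ uu k r m := by
  rw [uu]
  exact Dvd.dvd.mul_right (pow_dvd_pow X (Nat.le_mul_of_pos_left m hr)) _

lemma X_pow_dvd_uu_pow (k r m n : ℕ) (hr : 1 ≤ r) (hn : 1 ≤ n) :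
    (X : PowerSeries ℚ) ^ m ∣ (uu k r m) ^ n :=
  (X_pow_dvd_uu k r m hr).trans (dvd_pow_self _ (by omega))

lemma Acoeff_one (K : ℤ) (R N' : ℕ) :
    Acoeff 1 K R N' = ∑ m ∈ Finset.Icc 1 N',
      coeff N' ((X : PowerSeries ℚ) ^ (R * m) * dFac m K) := by
  rw [Acoeff]
  refine Finset.sum_nbij' (fun f => f 0) (fun m => fun _ => m) ?_ ?_ ?_ ?_ ?_
  · intro f hf
    rw [strictTuples, Finset.mem_filter, Fintype.mem_piFinset] at hf
    exact hf.1 0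
  · intro m hm
    rw [strictTuples, Finset.mem_filter, Fintype.mem_piFinset]
    exact ⟨fun _ => hm, Subsingleton.strictMono _⟩
  · intro f hf
    funext i
    have : i = 0 := Subsingleton.elim i 0
    rw [this]
  · intro m hm
    rfl
  · intro f hf
    rw [Fin.sum_univ_one, Fin.prod_univ_one]

lemma Aser_trunc (n k r N N' : ℕ) (hn : 1 ≤ n) (hr : 1 ≤ r) (hN' : N' ≤ N) :
    coeff N' (Aser 1 ((n * k : ℕ) : ℤ) (n * r))
      = coeff N' (∑ m ∈ Finset.Icc 1 N, (uu k r m) ^ n) := by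
  rw [Aser, coeff_mk, Acoeff_one, map_sum]
  have step : ∀ m, coeff N' ((X : PowerSeries ℚ) ^ ((n * r) * m) * dFac m ((n * k : ℕ) : ℤ))
      = coeff N' ((uu k r m) ^ n) := fun m => by rw [uu_pow]
  rw [Finset.sum_congr rfl fun m _ => step m]
  refine Finset.sum_subset (Finset.Icc_subset_Icc_right hN') ?_
  intro m hm hm'
  rw [Finset.mem_Icc] at hm hm'
  exact X_pow_dvd_iff.mp (X_pow_dvd_uu_pow k r m n hr hn) N' (by omega)

lemma pi_eq_of_coeff_le_eq {N : ℕ} {a b : PowerSeries ℚ}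
    (h : ∀ N' ≤ N, coeff N' a = coeff N' b) :
    Ideal.Quotient.mk (Ideal.span {(X : PowerSeries ℚ) ^ (N+1)}) a
      = Ideal.Quotient.mk (Ideal.span {(X : PowerSeries ℚ) ^ (N+1)}) b := by
  rw [Ideal.Quotient.eq, Ideal.mem_span_singleton]
  exact X_pow_dvd_iff.mpr fun m hm => by rw [map_sub, h m (by omega), sub_self]

lemma prod_uu_form (k r j : ℕ) (f : Fin j → ℕ) :
    (X : PowerSeries ℚ) ^ (r * ∑ i, f i) * ∏ i, dFac (f i) (k : ℤ)
      = ∏ i, uu k r (f i) := by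
  have : ∀ i : Fin j, uu k r (f i) = X ^ (r * f i) * dFac (f i) (k : ℤ) := fun i => rfl
  rw [Finset.prod_congr rfl fun i _ => this i, Finset.prod_mul_distrib,
    Finset.prod_pow_eq_pow_sum, ← Finset.mul_sum]

lemma monoTuples_subset {j N' N : ℕ} (h : N' ≤ N) : monoTuples j N' ⊆ monoTuples j N := by
  intro f hf
  rw [monoTuples, Finset.mem_filter, Fintype.mem_piFinset] at hf ⊢
  refine ⟨fun i => ?_, hf.2⟩
  have := hf.1 i
  rw [Finset.mem_Icc] at this ⊢
  omega

/-- equation (5.1): the quasi-shuffle exponential identity for `𝒜*`.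
For `k, r ∈ ℕ` (positive), in `ℚ⟦q⟧⟦X⟧`:
`exp(Σ_{n≥1} (1/n) 𝒜_{1,nk,nr}(q) Xⁿ) = Σ_{j≥0} 𝒜*_{j,k,r}(q) X^j` (with `𝒜*_{0,k,r} = 1`);
equivalently, `𝒜*_{a,k,r}(q)` is the coefficient of `X^a` in the left-hand side. -/
theorem Astar_exp_identity (k r : ℕ) (hk : 1 ≤ k) (hr : 1 ≤ r) :
    expX (PowerSeries.mk fun n =>
        if n = 0 then 0 else ((1 : ℚ) / n) • Aser 1 ((n * k : ℕ) : ℤ) (n * r)) =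
      PowerSeries.mk (fun j => AstarSer j (k : ℤ) r) := by
  set E : PowerSeries (PowerSeries ℚ) := PowerSeries.mk fun n =>
      if n = 0 then 0 else ((1 : ℚ) / n) • Aser 1 ((n * k : ℕ) : ℤ) (n * r) with hE
  apply PowerSeries.ext; intro j
  rw [coeff_mk]
  apply PowerSeries.ext; intro N
  set I : Ideal (PowerSeries ℚ) := Ideal.span {(X : PowerSeries ℚ) ^ (N+1)} with hI
  set π : PowerSeries ℚ →ₐ[ℚ] (PowerSeries ℚ ⧸ I) := Ideal.Quotient.mkₐ ℚ I with hπ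
  have hπmk : ∀ x, π x = Ideal.Quotient.mk I x := fun x => rfl
  suffices hq : π (coeff j (expX E)) = π (AstarSer j (k : ℤ) r) by
    have hmem : coeff j (expX E) - AstarSer j (k : ℤ) r ∈ I := by
      rw [← Ideal.Quotient.eq]
      rw [hπmk, hπmk] at hq
      exact hq
    rw [hI, Ideal.mem_span_singleton] at hmem
    have h0 := X_pow_dvd_iff.mp hmem N (lt_add_one N)
    rw [map_sub, sub_eq_zero] at h0
    exact h0
  have hLHS : π (coeff j (expX E)) =
      π (∑ f ∈ monoTuples j N, ∏ i, uu k r (f i)) := by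
    have hRH : (π : PowerSeries ℚ →+* (PowerSeries ℚ ⧸ I)) = Ideal.Quotient.mk I := rfl
    have h1 : π (coeff j (expX E))
        = coeff j (PowerSeries.map (π : PowerSeries ℚ →+* _) (expX E)) := by
      rw [PowerSeries.coeff_map]; rfl
    rw [h1, expX_eq_expE, expE_map π E]
    have h2 : PowerSeries.map (π : PowerSeries ℚ →+* _) E
        = ∑ m ∈ Finset.Icc 1 N, Lc (π (uu k r m)) := by
      ext n
      rw [PowerSeries.coeff_map, hE, coeff_mk, map_sum, hRH]
      have h3 : ∀ m, coeff n (Lc (π (uu k r m)))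
          = if n = 0 then 0 else ((1:ℚ)/n) • (π (uu k r m))^n := fun m => by
        rw [Lc, coeff_mk]
      rw [Finset.sum_congr rfl fun m _ => h3 m]
      by_cases hn : n = 0
      · subst hn
        simp
      · have hsum : ∑ m ∈ Finset.Icc 1 N,
            (if n = 0 then 0 else ((1:ℚ)/n) • (π (uu k r m))^n)
            = ((1:ℚ)/n) • ∑ m ∈ Finset.Icc 1 N, (π (uu k r m))^n := by
          rw [Finset.smul_sum]
          exact Finset.sum_congr rfl fun m _ => by rw [if_neg hn]
        rw [if_neg hn, hsum]
        have hπs : Ideal.Quotient.mk I (((1:ℚ)/n) • Aser 1 ((n * k : ℕ) : ℤ) (n * r))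
            = ((1:ℚ)/n) • Ideal.Quotient.mk I (Aser 1 ((n * k : ℕ) : ℤ) (n * r)) :=
          map_smul π _ _
        rw [hπs]
        congr 1
        have h4 : Ideal.Quotient.mk I (Aser 1 ((n * k : ℕ) : ℤ) (n * r))
            = Ideal.Quotient.mk I (∑ m ∈ Finset.Icc 1 N, (uu k r m) ^ n) := by
          rw [hI]
          exact pi_eq_of_coeff_le_eq fun N' hN' =>
            Aser_trunc n k r N N' (by omega) hr hN'
        rw [h4, map_sum]
        refine Finset.sum_congr rfl fun m _ => ?_
        rw [map_pow]
        rfl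
    rw [h2, expE_sum _ _ (fun m _ => constantCoeff_Lc _),
      Finset.prod_congr rfl (fun m _ => expE_Lc (π (uu k r m))),
      coeff_prod_geom (fun m => π (uu k r m)) N j, map_sum]
    exact Finset.sum_congr rfl fun f _ => (map_prod π _ _).symm
  have hRHS : π (AstarSer j (k : ℤ) r) =
      π (∑ f ∈ monoTuples j N, ∏ i, uu k r (f i)) := by
    rw [hπmk, hπmk, hI]
    refine pi_eq_of_coeff_le_eq fun N' hN' => ?_
    rw [AstarSer, coeff_mk, AstarCoeff, map_sum]
    have hterm : ∀ f : Fin j → ℕ,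
        coeff N' ((X : PowerSeries ℚ) ^ (r * ∑ i, f i) * ∏ i, dFac (f i) (k : ℤ))
          = coeff N' (∏ i, uu k r (f i)) := fun f => by rw [prod_uu_form]
    rw [Finset.sum_congr rfl fun f _ => hterm f]
    refine Finset.sum_subset (monoTuples_subset hN') ?_
    intro f hf hf'
    rw [monoTuples, Finset.mem_filter, Fintype.mem_piFinset] at hf hf'
    have hex : ∃ i, N' < f i := by
      by_contra hcon
      push_neg at hcon
      refine hf' ⟨fun i => ?_, hf.2⟩
      have := hf.1 i
      rw [Finset.mem_Icc] at this ⊢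
      exact ⟨this.1, hcon i⟩
    obtain ⟨i0, hi0⟩ := hex
    have hdvd : (X : PowerSeries ℚ) ^ (f i0) ∣ ∏ i, uu k r (f i) :=
      (X_pow_dvd_uu k r (f i0) hr).trans (Finset.dvd_prod_of_mem _ (Finset.mem_univ i0))
    exact X_pow_dvd_iff.mp hdvd N' hi0
  rw [hLHS, hRHS]
end
end
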